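/- Let μ > 0, B ≥ 1 an integer, j ∈ {0,…,B−1}, and 0 < τ_{B−1} ≤ … ≤ τ_1 < ∞ (no condition on the lowest threshold except 0 ≤ τ_B ≤ τ_{B−1}). Let S_j(x; τ_B) denote the survival function 1 − F_j(x) of the inter-update CDF with lowest threshold τ_B. If 0 ≤ τ_B ≤ τ_B′ ≤ τ_{B−1}, then S_j(x; τ_B) ≤ S_j(x; τ_B′) for all x, and consequently ∫_0^∞ S_j(x; τ_B) dx ≤ ∫_0^∞ S_j(x; τ_B′) dx, i.e., the mean inter-update time is nondecreasing in the threshold τ_B used at full battery. -/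

import Mathlib

open MeasureTheory

/-- The Erlang CDF `G_m` with rate `μ` and (integer) stage parameter `m`:
`G_m(t) = 1 - e^(-μt) ∑_{k=0}^{m-1} (μt)^k / k!` for `t ≥ 0` and `m ≥ 1`,
with the conventions `G_m(t) = 0` for `t < 0` and `G_m(t) = 1` for `t ≥ 0` when `m ≤ 0`. -/
noncomputable def erlangCDF (μ : ℝ) (m : ℤ) (t : ℝ) : ℝ :=
  if t < 0 then 0
  else if m ≤ 0 then 1
  else 1 - Real.exp (-(μ * t)) *
    ∑ k ∈ Finset.range m.toNat, (μ * t) ^ k / (Nat.factorial k : ℝ)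

/-- The inter-update CDF `F_j` of a monotone threshold policy with battery size `B`,
thresholds `τ B ≤ τ (B-1) ≤ … ≤ τ 1` and post-update energy level `j`:
`F_j(x) = 0` for `x < τ B`, `F_j(x) = G_{m-j}(x)` for `τ m ≤ x < τ (m-1)` (`m = 2,…,B`)
and `F_j(x) = G_{1-j}(x)` for `x ≥ τ 1`. -/
noncomputable def interUpdateCDF (μ : ℝ) (B : ℕ) (τ : ℕ → ℝ) (j : ℕ) (x : ℝ) : ℝ :=
  if x < τ B then 0
  else erlangCDF μ
    ((sInf {m : ℕ | 1 ≤ m ∧ m ≤ B ∧ τ m ≤ x} : ℕ) - (j : ℤ)) x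

lemma erlang_nonneg (μ : ℝ) (hμ : 0 ≤ μ) (m : ℤ) (t : ℝ) : 0 ≤ erlangCDF μ m t := by
  unfold erlangCDF
  split_ifs with h1 h2
  · norm_num
  · norm_num
  · push_neg at h1
    have ht : 0 ≤ μ * t := mul_nonneg hμ h1
    have := Real.sum_le_exp_of_nonneg ht m.toNat
    have hexp : Real.exp (-(μ * t)) * ∑ k ∈ Finset.range m.toNat, (μ * t) ^ k / (Nat.factorial k : ℝ)
        ≤ Real.exp (-(μ * t)) * Real.exp (μ * t) :=
      mul_le_mul_of_nonneg_left this (Real.exp_pos _).le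
    rw [← Real.exp_add] at hexp
    simp at hexp
    linarith

lemma erlang_le_one (μ : ℝ) (hμ : 0 ≤ μ) (m : ℤ) (t : ℝ) : erlangCDF μ m t ≤ 1 := by
  unfold erlangCDF
  split_ifs with h1 h2
  · norm_num
  · norm_num
  · push_neg at h1
    have ht : 0 ≤ μ * t := mul_nonneg hμ h1
    have hs : 0 ≤ ∑ k ∈ Finset.range m.toNat, (μ * t) ^ k / (Nat.factorial k : ℝ) := by
      apply Finset.sum_nonneg
      intro k _
      positivity
    nlinarith [Real.exp_pos (-(μ * t)), mul_nonneg (Real.exp_pos (-(μ * t))).le hs]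

lemma erlang_measurable (μ : ℝ) (m : ℤ) : Measurable (erlangCDF μ m) := by
  unfold erlangCDF
  apply Measurable.ite measurableSet_Iio measurable_const
  apply Measurable.ite (by simp) measurable_const
  fun_prop

/-- for `μ > 0`, `B ≥ 1`, upper thresholds `0 < τ (B-1) ≤ … ≤ τ 1 < ∞`,
`j ∈ {0,…,B-1}`, and two choices `0 ≤ b ≤ b' ≤ τ (B-1)` of the lowest threshold `τ B`,
the survival functions `S_j(·; b) = 1 - F_j(·; b)` of the inter-update CDF satisfy
`S_j(x; b) ≤ S_j(x; b')` for all `x`, and hence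
`∫_0^∞ S_j(x; b) dx ≤ ∫_0^∞ S_j(x; b') dx`: the mean inter-update time is
nondecreasing in the threshold used at full battery. -/
theorem mean_interupdate_mono_in_lowest_threshold (μ : ℝ) (hμ : 0 < μ)
    (B : ℕ) (hB : 1 ≤ B) (τ : ℕ → ℝ) (j : ℕ) (hj : j < B)
    (hpos : 2 ≤ B → 0 < τ (B - 1))
    (hmono : ∀ m, 2 ≤ m → m ≤ B - 1 → τ m ≤ τ (m - 1))
    (b b' : ℝ) (hb0 : 0 ≤ b) (hbb' : b ≤ b') (hb'τ : 2 ≤ B → b' ≤ τ (B - 1)) :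
    (∀ x, 1 - interUpdateCDF μ B (Function.update τ B b) j x
        ≤ 1 - interUpdateCDF μ B (Function.update τ B b') j x) ∧
      ∫ x in Set.Ioi (0 : ℝ), (1 - interUpdateCDF μ B (Function.update τ B b) j x)
        ≤ ∫ x in Set.Ioi (0 : ℝ),
            (1 - interUpdateCDF μ B (Function.update τ B b') j x) := by
  -- antitone chain of thresholds
  have chain : ∀ m n : ℕ, 1 ≤ m → m ≤ n → n ≤ B - 1 → τ n ≤ τ m := by
    intro m n h1 hmn
    induction n, hmn using Nat.le_induction with
    | base => intro _; exact le_refl _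
    | succ n hmn ih =>
      intro hn1
      have h2 : τ (n + 1) ≤ τ n := by
        have := hmono (n + 1) (by omega) hn1
        simpa using this
      exact le_trans h2 (ih (by omega))
  -- sets coincide for x ≥ b'
  have hset : ∀ x : ℝ, b' ≤ x →
      {m : ℕ | 1 ≤ m ∧ m ≤ B ∧ Function.update τ B b m ≤ x}
        = {m : ℕ | 1 ≤ m ∧ m ≤ B ∧ Function.update τ B b' m ≤ x} := by
    intro x hx
    ext m
    by_cases hm : m = B
    · subst hm
      simp only [Set.mem_setOf_eq, Function.update_self]
      constructor
      · rintro ⟨a, c, _⟩; exact ⟨a, c, hx⟩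
      · rintro ⟨a, c, _⟩; exact ⟨a, c, le_trans hbb' hx⟩
    · simp only [Set.mem_setOf_eq, Function.update_of_ne hm]
  -- equality of CDFs for x ≥ b'
  have hFeq : ∀ x : ℝ, b' ≤ x →
      interUpdateCDF μ B (Function.update τ B b) j x
        = interUpdateCDF μ B (Function.update τ B b') j x := by
    intro x hx
    unfold interUpdateCDF
    rw [Function.update_self, Function.update_self,
      if_neg (not_lt.mpr (le_trans hbb' hx)), if_neg (not_lt.mpr hx), hset x hx]
  -- sInf = B on [b, b')
  have hNB : ∀ x : ℝ, b ≤ x → x < b' →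
      sInf {m : ℕ | 1 ≤ m ∧ m ≤ B ∧ Function.update τ B b m ≤ x} = B := by
    intro x hbx hxb'
    have hmem : B ∈ {m : ℕ | 1 ≤ m ∧ m ≤ B ∧ Function.update τ B b m ≤ x} := by
      refine ⟨hB, le_refl B, ?_⟩
      rw [Function.update_self]; exact hbx
    refine le_antisymm (Nat.sInf_le hmem) ?_
    by_contra hlt
    push_neg at hlt
    obtain ⟨h1, h2, h3⟩ := Nat.sInf_mem (⟨B, hmem⟩ :
      {m : ℕ | 1 ≤ m ∧ m ≤ B ∧ Function.update τ B b m ≤ x}.Nonempty)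
    set N := sInf {m : ℕ | 1 ≤ m ∧ m ≤ B ∧ Function.update τ B b m ≤ x} with hN
    have hne : N ≠ B := Nat.ne_of_lt hlt
    rw [Function.update_of_ne hne] at h3
    have hB2 : 2 ≤ B := by omega
    have : b' ≤ τ N := le_trans (hb'τ hB2) (chain N (B - 1) h1 (by omega) (le_refl _))
    linarith
  -- pointwise inequality
  have hpt : ∀ x, 1 - interUpdateCDF μ B (Function.update τ B b) j x
      ≤ 1 - interUpdateCDF μ B (Function.update τ B b') j x := by
    intro x
    by_cases hxb : x < b
    · have hxb2 : x < b' := lt_of_lt_of_le hxb hbb'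
      unfold interUpdateCDF
      rw [Function.update_self, Function.update_self, if_pos hxb, if_pos hxb2]
    · by_cases hxb2 : x < b'
      · have h0 : interUpdateCDF μ B (Function.update τ B b') j x = 0 := by
          unfold interUpdateCDF
          rw [Function.update_self, if_pos hxb2]
        have h1 : 0 ≤ interUpdateCDF μ B (Function.update τ B b) j x := by
          unfold interUpdateCDF
          split_ifs
          · exact le_refl 0
          · exact erlang_nonneg μ hμ.le _ x
        rw [h0]; linarith
      · rw [hFeq x (not_lt.mp hxb2)]
  refine ⟨hpt, ?_⟩
  -- the difference function
  set φ : ℝ → ℝ := fun x => erlangCDF μ ((B : ℤ) - (j : ℤ)) x with hφ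
  have hdiff : (fun x => (1 - interUpdateCDF μ B (Function.update τ B b') j x)
      - (1 - interUpdateCDF μ B (Function.update τ B b) j x))
      = Set.indicator (Set.Ico b b') φ := by
    funext x
    by_cases hxb : x < b
    · have hxb2 : x < b' := lt_of_lt_of_le hxb hbb'
      have hnm : x ∉ Set.Ico b b' := by simp [Set.mem_Ico]; intro h; linarith
      rw [Set.indicator_of_notMem hnm]
      unfold interUpdateCDF
      rw [Function.update_self, Function.update_self, if_pos hxb, if_pos hxb2]
      ring
    · by_cases hxb2 : x < b'
      · have hmm : x ∈ Set.Ico b b' := ⟨not_lt.mp hxb, hxb2⟩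
        rw [Set.indicator_of_mem hmm]
        unfold interUpdateCDF
        rw [Function.update_self, Function.update_self, if_pos hxb2,
          if_neg hxb, hNB x (not_lt.mp hxb) hxb2]
        ring
      · have hnm : x ∉ Set.Ico b b' := by
          simp [Set.mem_Ico]; intro h; exact not_lt.mp hxb2
        rw [Set.indicator_of_notMem hnm, hFeq x (not_lt.mp hxb2)]
        ring
  have hφm : Measurable φ := erlang_measurable μ _
  have hφint : IntegrableOn φ (Set.Ico b b') := by
    apply Integrable.mono' (g := fun _ => (1 : ℝ))
      ((integrableOn_const_iff (C := (1 : ℝ))).mpr (Or.inr measure_Ico_lt_top))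
      hφm.aestronglyMeasurable.restrict
    filter_upwards with x
    rw [Real.norm_eq_abs, abs_le]
    exact ⟨by linarith [erlang_nonneg μ hμ.le ((B : ℤ) - (j : ℤ)) x],
      erlang_le_one μ hμ.le _ x⟩
  have hh : IntegrableOn (fun x => (1 - interUpdateCDF μ B (Function.update τ B b') j x)
      - (1 - interUpdateCDF μ B (Function.update τ B b) j x)) (Set.Ioi (0 : ℝ)) := by
    rw [hdiff]
    exact (hφint.integrable_indicator measurableSet_Ico).integrableOn
  by_cases hf : IntegrableOn
      (fun x => 1 - interUpdateCDF μ B (Function.update τ B b) j x) (Set.Ioi (0 : ℝ))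
  · have hg : IntegrableOn
        (fun x => 1 - interUpdateCDF μ B (Function.update τ B b') j x) (Set.Ioi (0 : ℝ)) := by
      have heq : (fun x => 1 - interUpdateCDF μ B (Function.update τ B b') j x)
          = fun x => (1 - interUpdateCDF μ B (Function.update τ B b) j x)
            + ((1 - interUpdateCDF μ B (Function.update τ B b') j x)
              - (1 - interUpdateCDF μ B (Function.update τ B b) j x)) := by
        funext x; ring
      rw [heq]
      exact hf.add hh
    exact setIntegral_mono hf hg hpt
  · have hg : ¬ IntegrableOn
        (fun x => 1 - interUpdateCDF μ B (Function.update τ B b') j x) (Set.Ioi (0 : ℝ)) := by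
      intro hgI
      apply hf
      have heq : (fun x => 1 - interUpdateCDF μ B (Function.update τ B b) j x)
          = fun x => (1 - interUpdateCDF μ B (Function.update τ B b') j x)
            - ((1 - interUpdateCDF μ B (Function.update τ B b') j x)
              - (1 - interUpdateCDF μ B (Function.update τ B b) j x)) := by
        funext x; ring
      rw [heq]
      exact hgI.sub hh
    rw [integral_undef hf, integral_undef hg]
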